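/- Let λ > 0 with λ² > 12, and define the timelike effective potential U_λ(ξ) = (1 − 2/ξ)·(1 + λ²/ξ²) for ξ > 0. Define ξ_min = (λ²/2)·(1 + √(1 − 12/λ²)) and ξ_max = (λ²/2)·(1 − √(1 − 12/λ²)). Then 3 < ξ_max < 6 < ξ_min, U_λ has a local maximum at ξ_max and a local minimum at ξ_min, and the derivative of U_λ on (0, ∞) vanishes exactly at the two points ξ_max and ξ_min. -/

import Mathlib

set_option maxHeartbeats 1000000

/-- For `λ² > 12`, the timelike effective potential `U_λ` has a local maximum at
`ξ_max` and a local minimum at `ξ_min`, with `3 < ξ_max < 6 < ξ_min`, and its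
derivative on `(0, ∞)` vanishes exactly at these two points. -/
theorem timelike_potential_critical_points
    (lam : ℝ) (hlam : 0 < lam) (hlam2 : 12 < lam ^ 2)
    (U : ℝ → ℝ) (hU : U = fun ξ => (1 - 2 / ξ) * (1 + lam ^ 2 / ξ ^ 2))
    (ξmin ξmax : ℝ)
    (hξmin : ξmin = lam ^ 2 / 2 * (1 + Real.sqrt (1 - 12 / lam ^ 2)))
    (hξmax : ξmax = lam ^ 2 / 2 * (1 - Real.sqrt (1 - 12 / lam ^ 2))) :
    3 < ξmax ∧ ξmax < 6 ∧ 6 < ξmin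
      ∧ IsLocalMax U ξmax ∧ IsLocalMin U ξmin
      ∧ (∀ ξ ∈ Set.Ioi (0 : ℝ), deriv U ξ = 0 ↔ (ξ = ξmax ∨ ξ = ξmin)) := by
  subst hU
  set s := Real.sqrt (1 - 12 / lam ^ 2) with hs
  have hl2 : (0:ℝ) < lam ^ 2 := by positivity
  have h12 : 0 < 1 - 12 / lam ^ 2 := by
    rw [sub_pos]; exact (div_lt_one hl2).mpr hlam2
  have hs0 : 0 < s := Real.sqrt_pos.mpr h12
  have hs2 : s ^ 2 = 1 - 12 / lam ^ 2 := Real.sq_sqrt h12.le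
  have hs2' : lam ^ 2 * s ^ 2 = lam ^ 2 - 12 := by
    rw [hs2]; field_simp
  have hs1 : s < 1 := by nlinarith [div_pos (by norm_num : (0:ℝ) < 12) hl2]
  have hsum : ξmax + ξmin = lam ^ 2 := by rw [hξmax, hξmin]; ring
  have hprod : ξmax * ξmin = 3 * lam ^ 2 := by
    rw [hξmax, hξmin]; linear_combination (-(lam ^ 2) / 4) * hs2'
  have hx3 : 3 < ξmax := by
    rw [hξmax]; nlinarith
  have hx6 : ξmax < 6 := by
    rw [hξmax]; nlinarith
  have hn6 : 6 < ξmin := by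
    rw [hξmin]; nlinarith
  have hq : ∀ ξ : ℝ, ξ ^ 2 - lam ^ 2 * ξ + 3 * lam ^ 2 = (ξ - ξmax) * (ξ - ξmin) := by
    intro ξ
    linear_combination ξ * hsum - hprod
  -- derivative
  have hder : ∀ ξ : ℝ, 0 < ξ →
      HasDerivAt (fun ξ => (1 - 2 / ξ) * (1 + lam ^ 2 / ξ ^ 2))
        (2 * ((ξ - ξmax) * (ξ - ξmin)) / ξ ^ 4) ξ := by
    intro ξ hξ
    have hne : ξ ≠ 0 := hξ.ne'
    have h1 : HasDerivAt (fun x : ℝ => 1 - 2 / x) (-(2 * (-(ξ ^ 2)⁻¹))) ξ := by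
      simpa [div_eq_mul_inv] using ((hasDerivAt_inv hne).const_mul (2:ℝ)).const_sub 1
    have h2 : HasDerivAt (fun x : ℝ => 1 + lam ^ 2 / x ^ 2)
        (lam ^ 2 * (-(2 * ξ) / (ξ ^ 2) ^ 2)) ξ := by
      have hp : HasDerivAt (fun x : ℝ => x ^ 2) (2 * ξ) ξ := by
        simpa using hasDerivAt_pow 2 ξ
      have := ((hp.inv (pow_ne_zero 2 hne)).const_mul (lam ^ 2)).const_add 1
      simpa [div_eq_mul_inv, mul_comm] using this
    have h := h1.mul h2
    refine HasDerivAt.congr_deriv h ?_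
    rw [← hq ξ]
    field_simp
    ring
  have hderiv : ∀ ξ : ℝ, 0 < ξ →
      deriv (fun ξ => (1 - 2 / ξ) * (1 + lam ^ 2 / ξ ^ 2)) ξ
        = 2 * ((ξ - ξmax) * (ξ - ξmin)) / ξ ^ 4 := fun ξ hξ => (hder ξ hξ).deriv
  have hdiff : DifferentiableOn ℝ (fun ξ => (1 - 2 / ξ) * (1 + lam ^ 2 / ξ ^ 2)) (Set.Ioi 0) :=
    fun x hx => ((hder x hx).differentiableAt).differentiableWithinAt
  have hxmin6 : ξmax < ξmin := by linarith
  refine ⟨hx3, hx6, hn6, ?_, ?_, ?_⟩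
  · -- local max at ξmax
    refine isLocalMax_of_deriv_Ioo (a := 3) (c := 6) hx3 hx6
      (hder ξmax (by linarith)).differentiableAt.continuousAt
      (hdiff.mono ?_) (hdiff.mono ?_) ?_ ?_
    · intro x hx; exact Set.mem_Ioi.mpr (by linarith [hx.1])
    · intro x hx; exact Set.mem_Ioi.mpr (by linarith [hx.1])
    · intro x hx
      rw [hderiv x (by linarith [hx.1])]
      have h1 : x - ξmax < 0 := by linarith [hx.2]
      have h2 : x - ξmin < 0 := by linarith [hx.2]
      exact div_nonneg (by nlinarith) (by positivity)
    · intro x hx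
      rw [hderiv x (by linarith [hx.1])]
      have h1 : 0 < x - ξmax := by linarith [hx.1]
      have h2 : x - ξmin < 0 := by linarith [hx.2]
      exact div_nonpos_of_nonpos_of_nonneg (by nlinarith) (by positivity)
  · -- local min at ξmin
    refine isLocalMin_of_deriv_Ioo (a := ξmax) (c := ξmin + 1) hxmin6 (by linarith)
      (hder ξmin (by linarith)).differentiableAt.continuousAt
      (hdiff.mono ?_) (hdiff.mono ?_) ?_ ?_
    · intro x hx; exact Set.mem_Ioi.mpr (by linarith [hx.1])
    · intro x hx; exact Set.mem_Ioi.mpr (by linarith [hx.1])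
    · intro x hx
      rw [hderiv x (by linarith [hx.1])]
      have h1 : 0 < x - ξmax := by linarith [hx.1]
      have h2 : x - ξmin < 0 := by linarith [hx.2]
      exact div_nonpos_of_nonpos_of_nonneg (by nlinarith) (by positivity)
    · intro x hx
      rw [hderiv x (by linarith [hx.1])]
      have h1 : 0 < x - ξmax := by linarith [hx.1]
      have h2 : 0 < x - ξmin := by linarith [hx.1]
      exact div_nonneg (by nlinarith) (by positivity)
  · intro ξ hξ
    have hξ0 : 0 < ξ := hξ
    rw [hderiv ξ hξ0]
    rw [div_eq_zero_iff]
    constructor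
    · rintro (h | h)
      · have h' : (ξ - ξmax) * (ξ - ξmin) = 0 := by linarith
        rcases mul_eq_zero.mp h' with h'' | h''
        · exact Or.inl (by linarith)
        · exact Or.inr (by linarith)
      · exact absurd h (pow_ne_zero 4 hξ0.ne')
    · rintro (rfl | rfl) <;> · left; ring
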